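/- Let φ be a finite set of marked points in the torus T_n with distinct marks, let G(φ) be the graph where (ξ,r) and (η,t) are adjacent if d_{T_n}(ξ,η) ≤ max{r,t}, and let G'(φ) be the thinned graph where the edge from (ξ,r) to (η,t) with t < r is kept only if there is no (ζ,w) ∈ φ with d_{T_n}(ξ,ζ) ≤ r, t < w < r, and d_{T_n}(ζ,η) ≤ w. Then G(φ) and G'(φ) have exactly the same connected components. -/

import Mathlib

open MeasureTheory

/-- Toroidal distance on the torus of side length `n`, represented on `[-n/2,n/2]^d`. -/
noncomputable def torDist (d : ℕ) (n : ℝ) (x y : EuclideanSpace ℝ (Fin d)) : ℝ :=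
  Real.sqrt (∑ i, (min |x i - y i| (n - |x i - y i|)) ^ 2)

/-- Undirected adjacency in the scale-free Gilbert graph `G(φ)`:
`(ξ,r)` and `(η,t)` are adjacent if `d_{T_n}(ξ,η) ≤ max{r,t}`. -/
noncomputable def gilbertAdj (d : ℕ) (n : ℝ) (x y : EuclideanSpace ℝ (Fin d) × ℝ) : Prop :=
  x ≠ y ∧ torDist d n x.1 y.1 ≤ max x.2 y.2

/-- Directed edge of the thinned scale-free Gilbert graph `G'(φ)`: the edge from `(ξ,r)`
to `(η,t)` with `t < r` and `d(ξ,η) ≤ r` is kept unless some `(ζ,w) ∈ φ` satisfies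
`d(ξ,ζ) ≤ r`, `t < w < r` and `d(ζ,η) ≤ w`. -/
noncomputable def thinnedEdge (d : ℕ) (n : ℝ) (φ : Finset (EuclideanSpace ℝ (Fin d) × ℝ))
    (x y : EuclideanSpace ℝ (Fin d) × ℝ) : Prop :=
  y.2 < x.2 ∧ torDist d n x.1 y.1 ≤ x.2 ∧
    ¬∃ z ∈ φ, torDist d n x.1 z.1 ≤ x.2 ∧ y.2 < z.2 ∧ z.2 < x.2 ∧ torDist d n z.1 y.1 ≤ z.2

lemma torDist_comm (d : ℕ) (n : ℝ) (x y : EuclideanSpace ℝ (Fin d)) :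
    torDist d n x y = torDist d n y x := by
  unfold torDist
  congr 1
  refine Finset.sum_congr rfl fun i _ => ?_
  rw [abs_sub_comm]

/-- For a finite set `φ` of marked points of the torus with pairwise distinct marks, the
scale-free Gilbert graph `G(φ)` and its thinning `G'(φ)` have exactly the same connected
components: two marked points of `φ` are joined by a path in `G(φ)` iff they are joined
by a path in (the undirected version of) `G'(φ)`. -/
theorem stmt7 {d : ℕ} (hd : 2 ≤ d) {n : ℝ} (hn : 1 ≤ n)
    (φ : Finset (EuclideanSpace ℝ (Fin d) × ℝ))
    (hφpos : ∀ x ∈ φ, 0 ≤ x.2)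
    (hmarks : Set.InjOn Prod.snd (φ : Set (EuclideanSpace ℝ (Fin d) × ℝ))) :
    ∀ x ∈ φ, ∀ y ∈ φ,
      (Relation.ReflTransGen
          (fun a b => a ∈ φ ∧ b ∈ φ ∧ gilbertAdj d n a b) x y ↔
        Relation.ReflTransGen
          (fun a b => a ∈ φ ∧ b ∈ φ ∧ (thinnedEdge d n φ a b ∨ thinnedEdge d n φ b a))
          x y) := by
  set R := fun a b => a ∈ φ ∧ b ∈ φ ∧ (thinnedEdge d n φ a b ∨ thinnedEdge d n φ b a) with hR
  have Rsymm : Symmetric R := by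
    intro a b ⟨ha, hb, h⟩
    exact ⟨hb, ha, h.symm⟩
  -- key lemma: ordered Gilbert edges are thinned-connected, by strong induction on
  -- the number of pairs with smaller mark gap
  have key : ∀ N : ℕ, ∀ x y : EuclideanSpace ℝ (Fin d) × ℝ, x ∈ φ → y ∈ φ →
      y.2 < x.2 → torDist d n x.1 y.1 ≤ x.2 →
      ((φ ×ˢ φ).filter (fun p => |p.1.2 - p.2.2| < |x.2 - y.2|)).card ≤ N →
      Relation.ReflTransGen R x y := by
    intro N
    induction N using Nat.strong_induction_on with
    | _ N ih =>
      intro x y hx hy hlt hdist hcard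
      by_cases hblk : ∃ z ∈ φ, torDist d n x.1 z.1 ≤ x.2 ∧ y.2 < z.2 ∧ z.2 < x.2 ∧
          torDist d n z.1 y.1 ≤ z.2
      · obtain ⟨z, hz, hxz, hyz, hzx, hzy⟩ := hblk
        have h1 : |x.2 - z.2| < |x.2 - y.2| := by
          rw [abs_of_pos (by linarith), abs_of_pos (by linarith)]; linarith
        have h2 : |z.2 - y.2| < |x.2 - y.2| := by
          rw [abs_of_pos (by linarith), abs_of_pos (by linarith)]; linarith
        have hsub1 : (φ ×ˢ φ).filter (fun p => |p.1.2 - p.2.2| < |x.2 - z.2|) ⊂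
            (φ ×ˢ φ).filter (fun p => |p.1.2 - p.2.2| < |x.2 - y.2|) := by
          constructor
          · intro p hp
            simp only [Finset.mem_filter] at hp ⊢
            exact ⟨hp.1, hp.2.trans h1⟩
          · intro hsub
            have hmem : (x, z) ∈ (φ ×ˢ φ).filter
                (fun p => |p.1.2 - p.2.2| < |x.2 - y.2|) := by
              simp only [Finset.mem_filter, Finset.mem_product]
              exact ⟨⟨hx, hz⟩, h1⟩
            have := hsub hmem
            simp only [Finset.mem_filter] at this
            exact lt_irrefl _ this.2
        have hsub2 : (φ ×ˢ φ).filter (fun p => |p.1.2 - p.2.2| < |z.2 - y.2|) ⊂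
            (φ ×ˢ φ).filter (fun p => |p.1.2 - p.2.2| < |x.2 - y.2|) := by
          constructor
          · intro p hp
            simp only [Finset.mem_filter] at hp ⊢
            exact ⟨hp.1, hp.2.trans h2⟩
          · intro hsub
            have hmem : (z, y) ∈ (φ ×ˢ φ).filter
                (fun p => |p.1.2 - p.2.2| < |x.2 - y.2|) := by
              simp only [Finset.mem_filter, Finset.mem_product]
              exact ⟨⟨hz, hy⟩, h2⟩
            have := hsub hmem
            simp only [Finset.mem_filter] at this
            exact lt_irrefl _ this.2
        have c1 := lt_of_lt_of_le (Finset.card_lt_card hsub1) hcard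
        have c2 := lt_of_lt_of_le (Finset.card_lt_card hsub2) hcard
        have r1 := ih _ c1 x z hx hz hzx hxz le_rfl
        have r2 := ih _ c2 z y hz hy hyz hzy le_rfl
        exact r1.trans r2
      · exact Relation.ReflTransGen.single ⟨hx, hy, Or.inl ⟨hlt, hdist, hblk⟩⟩
  -- every Gilbert edge gives a thinned path
  have hedge : ∀ x ∈ φ, ∀ y ∈ φ, gilbertAdj d n x y → Relation.ReflTransGen R x y := by
    intro x hx y hy hadj
    obtain ⟨hne, hdist⟩ := hadj
    have hsne : x.2 ≠ y.2 := fun h => hne (hmarks hx hy h)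
    rcases lt_or_gt_of_ne hsne with h | h
    · have hd' : torDist d n y.1 x.1 ≤ y.2 := by
        rw [torDist_comm]
        calc torDist d n x.1 y.1 ≤ max x.2 y.2 := hdist
          _ = y.2 := max_eq_right h.le
      haveI : Std.Symm R := ⟨fun _ _ hab => Rsymm hab⟩
      exact Std.Symm.symm _ _ (key _ y x hy hx h hd' le_rfl)
    · have hd' : torDist d n x.1 y.1 ≤ x.2 := by
        calc torDist d n x.1 y.1 ≤ max x.2 y.2 := hdist
          _ = x.2 := max_eq_left h.le
      exact key _ x y hx hy h hd' le_rfl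
  intro x hx y hy
  constructor
  · intro h
    induction h with
    | refl => exact Relation.ReflTransGen.refl
    | tail _ hbc ih => exact (ih hbc.1).trans (hedge _ hbc.1 _ hbc.2.1 hbc.2.2)
  · intro h
    refine Relation.ReflTransGen.mono ?_ x y h
    rintro a b ⟨ha, hb, hor⟩
    refine ⟨ha, hb, ?_⟩
    rcases hor with ⟨hlt, hdist, -⟩ | ⟨hlt, hdist, -⟩
    · exact ⟨fun he => absurd (congrArg Prod.snd he) (ne_of_gt hlt),
        hdist.trans (le_max_left _ _)⟩
    · refine ⟨fun he => absurd (congrArg Prod.snd he) (ne_of_lt hlt), ?_⟩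
      rw [torDist_comm]
      exact hdist.trans (le_max_right _ _)
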